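/- Let $h_0, e, g_1 > 0$ and let $g : (0,\infty) \to \mathbb{R}$ be $C^2$ with $g(1) \geq g_1 > 0$, $g' \geq 0$, and $(r^2 g')' = e^2 g(r) h_0^2 r^2$ on $(1, R)$. Then for $1 < r < R$, $g'(r) \geq c_1 r + c_2/r^2$ where $c_1 = \frac{e^2 h_0^2 g_1}{3}$ and $c_2 = g'(1) - c_1$, and consequently $\int_1^R (g')^2 r^2\, dr \geq \frac{c_1^2}{5} R^5 + O(R^2)$ as $R \to \infty$. -/

import Mathlib

open Set MeasureTheory intervalIntegral

lemma sq_lower_aux (u v c2 : ℝ) (hu0 : 0 ≤ u) (hv0 : 0 ≤ v) (h : v + c2 ≤ u) :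
    v ^ 2 + 2 * c2 * v ≤ u ^ 2 := by
  by_cases hc : 0 ≤ v + c2
  · nlinarith [mul_le_mul h h hc hu0, sq_nonneg c2]
  · push_neg at hc
    nlinarith [sq_nonneg u, mul_nonneg hv0 (show (0:ℝ) ≤ -(v + c2) by linarith),
      mul_nonneg hv0 (show (0:ℝ) ≤ -c2 by linarith)]

set_option maxHeartbeats 1000000 in
theorem gauge_energy_lower_bound (e h0 g1 : ℝ)
    (he : 0 < e) (hh0 : 0 < h0) (hg1 : 0 < g1)
    (g g' : ℝ → ℝ)
    (hg1' : g1 ≤ g 1)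
    (hmono : ∀ r ∈ Set.Ici (1 : ℝ), 0 ≤ g' r)
    (hd1 : ∀ r ∈ Set.Ici (1 : ℝ), HasDerivAt g (g' r) r)
    (hdiv : ∀ r ∈ Set.Ioi (1 : ℝ),
      HasDerivAt (fun s => s ^ 2 * g' s) (e ^ 2 * g r * h0 ^ 2 * r ^ 2) r) :
    (∀ r > 1, g' r ≥ e ^ 2 * h0 ^ 2 * g1 / 3 * r
      + (g' 1 - e ^ 2 * h0 ^ 2 * g1 / 3) / r ^ 2) ∧
    ∃ C : ℝ, ∀ R > 1, ∫ r in (1 : ℝ)..R, (g' r) ^ 2 * r ^ 2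
      ≥ (e ^ 2 * h0 ^ 2 * g1 / 3) ^ 2 / 5 * R ^ 5 - C * R ^ 2 := by
  set c1 : ℝ := e ^ 2 * h0 ^ 2 * g1 / 3 with hc1def
  have hc1 : 0 < c1 := by positivity
  set c2 : ℝ := g' 1 - c1 with hc2def
  clear_value c1 c2
  -- g is monotone on Ici 1
  have hgmono : MonotoneOn g (Set.Ici 1) := by
    refine monotoneOn_of_hasDerivWithinAt_nonneg (convex_Ici 1)
      (fun x hx => (hd1 x hx).continuousAt.continuousWithinAt)
      (fun x hx => ?_) (fun x hx => hmono x (interior_subset hx))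
    exact (hd1 x (interior_subset hx)).hasDerivWithinAt
  have hgge : ∀ s ∈ Set.Ici (1 : ℝ), g1 ≤ g s := fun s hs =>
    hg1'.trans (hgmono Set.self_mem_Ici hs hs)
  -- F = s^2 g' s - c1 s^3 is monotone on Ioi 1
  have hFmono : MonotoneOn (fun s : ℝ => s ^ 2 * g' s - c1 * s ^ 3) (Set.Ioi 1) := by
    refine monotoneOn_of_hasDerivWithinAt_nonneg (convex_Ioi 1)
      (f' := fun x => e ^ 2 * g x * h0 ^ 2 * x ^ 2 - c1 * (3 * x ^ (3 - 1)))
      (fun x hx => ?_) (fun x hx => ?_) (fun x hx => ?_)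
    · exact (((hdiv x hx).sub ((hasDerivAt_pow 3 x).const_mul c1)).continuousAt).continuousWithinAt
    · rw [interior_Ioi] at hx
      have h := (hdiv x hx).sub ((hasDerivAt_pow 3 x).const_mul c1)
      rw [interior_Ioi]
      exact h.hasDerivWithinAt
    · rw [interior_Ioi] at hx
      have hx1 : (1 : ℝ) ≤ x := le_of_lt hx
      have hgx := hgge x hx1
      show 0 ≤ e ^ 2 * g x * h0 ^ 2 * x ^ 2 - c1 * (3 * x ^ (3 - 1))
      have heq : e ^ 2 * g x * h0 ^ 2 * x ^ 2 - c1 * (3 * x ^ (3 - 1)) =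
          e ^ 2 * h0 ^ 2 * x ^ 2 * (g x - g1) := by
        rw [hc1def]; push_cast; ring
      rw [heq]
      exact mul_nonneg (by positivity) (by linarith)
  -- key lower bound
  have hkey : ∀ r > (1:ℝ), c1 * r ^ 3 + c2 ≤ r ^ 2 * g' r := by
    intro r hr
    refine le_of_forall_pos_le_add fun ε hε => ?_
    have hslope := hasDerivAt_iff_tendsto_slope.mp (hd1 1 Set.self_mem_Ici)
    obtain ⟨δ, hδ, hδ'⟩ := Metric.tendsto_nhdsWithin_nhds.mp hslope (ε / 2) (half_pos hε)
    set t : ℝ := min 1 (min (ε / (14 * c1)) (min (δ / 2) ((r - 1) / 2))) with ht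
    have ht0 : 0 < t :=
      lt_min one_pos (lt_min (by positivity) (lt_min (by positivity) (by linarith)))
    have ht1 : t ≤ 1 := min_le_left _ _
    have htε : t ≤ ε / (14 * c1) := le_trans (min_le_right _ _) (min_le_left _ _)
    have htδ : t ≤ δ / 2 :=
      le_trans (min_le_right _ _) (le_trans (min_le_right _ _) (min_le_left _ _))
    have htr : t ≤ (r - 1) / 2 :=
      le_trans (min_le_right _ _) (le_trans (min_le_right _ _) (min_le_right _ _))
    set b : ℝ := 1 + t with hb
    have hb1 : 1 < b := by simp [hb]; linarith
    have hbr : b < r := by simp [hb]; linarith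
    obtain ⟨c, hc, hceq⟩ := exists_hasDerivAt_eq_slope g g' hb1
      (fun x hx => (hd1 x hx.1).continuousAt.continuousWithinAt)
      (fun x hx => hd1 x hx.1.le)
    have hbs : dist (slope g 1 b) (g' 1) < ε / 2 := by
      refine hδ' ?_ ?_
      · simp only [Set.mem_compl_iff, Set.mem_singleton_iff]
        intro h; rw [h] at hb1; linarith
      · rw [Real.dist_eq]; rw [abs_of_pos (by linarith)]; simp [hb]; linarith
    have hgc : g' 1 - ε / 2 ≤ g' c := by
      rw [Real.dist_eq] at hbs
      have := abs_lt.mp hbs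
      rw [slope_def_field] at this
      rw [hceq]; linarith [this.1]
    have hcF := hFmono (show c ∈ Set.Ioi 1 from hc.1) (show r ∈ Set.Ioi 1 from hr)
      (le_of_lt (hc.2.trans hbr))
    simp only at hcF
    have hgc0 : 0 ≤ g' c := hmono c hc.1.le
    have hc2 : 1 ≤ c ^ 2 := one_le_pow₀ hc.1.le
    have hcb3 : c ^ 3 ≤ b ^ 3 := pow_le_pow_left₀ (by linarith [hc.1]) hc.2.le 3
    have hb3 : b ^ 3 ≤ 1 + 7 * t := by
      simp only [hb]
      nlinarith [mul_nonneg (sub_nonneg.mpr ht1) ht0.le,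
        mul_nonneg (mul_nonneg (sub_nonneg.mpr ht1) ht0.le) ht0.le]
    have hct : c1 * t ≤ ε / 14 := by
      have := mul_le_mul_of_nonneg_left htε hc1.le
      rwa [show c1 * (ε / (14 * c1)) = ε / 14 by field_simp] at this
    have p1 : 0 ≤ (c ^ 2 - 1) * g' c := mul_nonneg (by linarith) hgc0
    have p2 : c1 * c ^ 3 ≤ c1 * b ^ 3 := mul_le_mul_of_nonneg_left hcb3 hc1.le
    have p3 : c1 * b ^ 3 ≤ c1 * (1 + 7 * t) := mul_le_mul_of_nonneg_left hb3 hc1.le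
    nlinarith [p1, p2, p3, hct, hcF, hgc]
  -- part 1
  have part1 : ∀ r > (1:ℝ), g' r ≥ c1 * r + c2 / r ^ 2 := by
    intro r hr
    have hr0 : (0:ℝ) < r ^ 2 := by positivity
    rw [ge_iff_le, show c1 * r + c2 / r ^ 2 = (c1 * r ^ 3 + c2) / r ^ 2 by
      field_simp, div_le_iff₀ hr0]
    have := hkey r hr
    linarith
  refine ⟨part1, ?_⟩
  -- part 2
  refine ⟨c1 ^ 2 / 5 + 2 * |c1 * c2|, fun R hR => ?_⟩
  -- pointwise bound on Icc 1 R
  have hpt : ∀ x ∈ Set.Icc (1:ℝ) R, c1 ^ 2 * x ^ 4 + 2 * c1 * c2 * x ≤ (g' x) ^ 2 * x ^ 2 := by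
    intro x hx
    rcases eq_or_lt_of_le hx.1 with h1 | h1
    · rw [← h1]
      have : c2 = g' 1 - c1 := hc2def
      nlinarith [sq_nonneg (g' 1 - c1)]
    · have hu1 : c1 * x ^ 3 + c2 ≤ x ^ 2 * g' x := hkey x h1
      have hgx0 : 0 ≤ g' x := hmono x h1.le
      have hu0 : 0 ≤ x ^ 2 * g' x := mul_nonneg (sq_nonneg x) hgx0
      have hv0 : (0:ℝ) ≤ c1 * x ^ 3 := by positivity
      have key := sq_lower_aux (x ^ 2 * g' x) (c1 * x ^ 3) c2 hu0 hv0 (by linarith)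
      have hx2 : (0:ℝ) < x ^ 2 := by positivity
      rw [← mul_le_mul_iff_of_pos_right hx2,
        show (c1 ^ 2 * x ^ 4 + 2 * c1 * c2 * x) * x ^ 2
          = (c1 * x ^ 3) ^ 2 + 2 * c2 * (c1 * x ^ 3) from by ring,
        show g' x ^ 2 * x ^ 2 * x ^ 2 = (x ^ 2 * g' x) ^ 2 from by ring]
      exact key
  -- integrability of (g')^2 r^2
  have hg'cont : ContinuousOn g' (Set.Ioi 1) := by
    have h1 : ContinuousOn (fun s : ℝ => (s ^ 2 * g' s) / s ^ 2) (Set.Ioi 1) := by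
      refine ContinuousOn.div (fun x hx => (hdiv x hx).continuousAt.continuousWithinAt)
        (continuous_pow 2).continuousOn ?_
      intro x hx
      have : (1:ℝ) < x := hx
      positivity
    refine ContinuousOn.congr h1 fun x hx => ?_
    have : (1:ℝ) < x := hx
    field_simp
  have hbound : ∀ x ∈ Set.Ioc (1:ℝ) R, g' x ≤ R ^ 2 * g' R := by
    intro x hx
    have hx1 : 1 < x := hx.1
    have hF := hFmono (show x ∈ Set.Ioi 1 from hx.1) (show R ∈ Set.Ioi 1 from hR) hx.2
    simp only at hF
    have hgx0 : 0 ≤ g' x := hmono x hx1.le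
    have hx2 : 1 ≤ x ^ 2 := one_le_pow₀ hx1.le
    have hxR3 : x ^ 3 ≤ R ^ 3 := pow_le_pow_left₀ (by linarith) hx.2 3
    have q1 : g' x ≤ x ^ 2 * g' x := by nlinarith [mul_nonneg (sub_nonneg.mpr hx2) hgx0]
    have q2 : c1 * x ^ 3 ≤ c1 * R ^ 3 := mul_le_mul_of_nonneg_left hxR3 hc1.le
    linarith [hF, q1, q2]
  have hMnn : 0 ≤ R ^ 2 * g' R := mul_nonneg (sq_nonneg R) (hmono R (Set.mem_Ici.mpr hR.le))
  have hint : IntervalIntegrable (fun r => (g' r) ^ 2 * r ^ 2) volume 1 R := by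
    rw [intervalIntegrable_iff_integrableOn_Ioc_of_le hR.le]
    refine ⟨ContinuousOn.aestronglyMeasurable ?_ measurableSet_Ioc, ?_⟩
    · exact (((hg'cont.mono Set.Ioc_subset_Ioi_self).pow 2).mul
        (continuous_pow 2).continuousOn)
    · refine HasFiniteIntegral.restrict_of_bounded (C := (R ^ 2 * g' R) ^ 2 * R ^ 2)
        measure_Ioc_lt_top ?_
      rw [ae_restrict_iff' measurableSet_Ioc]
      filter_upwards with x hx
      have h1 := hbound x hx
      have hgx0 : 0 ≤ g' x := hmono x hx.1.le
      have hx0 : 0 < x := lt_trans one_pos hx.1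
      rw [Real.norm_eq_abs, abs_of_nonneg (by positivity)]
      have h2 : (g' x) ^ 2 ≤ (R ^ 2 * g' R) ^ 2 := by nlinarith
      have h3 : x ^ 2 ≤ R ^ 2 := by nlinarith [hx.2]
      nlinarith [sq_nonneg (g' x), sq_nonneg x]
  have hintlow : IntervalIntegrable (fun r : ℝ => c1 ^ 2 * r ^ 4 + 2 * c1 * c2 * r)
      volume 1 R := (Continuous.intervalIntegrable (by continuity) _ _)
  have hmono_int := intervalIntegral.integral_mono_on hR.le hintlow hint hpt
  have hcomp : ∫ r in (1:ℝ)..R, (c1 ^ 2 * r ^ 4 + 2 * c1 * c2 * r)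
      = c1 ^ 2 * ((R ^ 5 - 1) / 5) + 2 * c1 * c2 * ((R ^ 2 - 1) / 2) := by
    rw [intervalIntegral.integral_add (f := fun r : ℝ => c1 ^ 2 * r ^ 4) (g := fun r : ℝ => 2 * c1 * c2 * r)
      ((continuous_const.mul (continuous_pow 4)).intervalIntegrable _ _)
      ((continuous_const.mul continuous_id').intervalIntegrable _ _),
      intervalIntegral.integral_const_mul, intervalIntegral.integral_const_mul,
      integral_pow, integral_id]
    norm_num
  rw [ge_iff_le]
  have hfin : c1 ^ 2 / 5 * R ^ 5 - (c1 ^ 2 / 5 + 2 * |c1 * c2|) * R ^ 2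
      ≤ c1 ^ 2 * ((R ^ 5 - 1) / 5) + 2 * c1 * c2 * ((R ^ 2 - 1) / 2) := by
    have hK1 : c1 * c2 ≤ |c1 * c2| := le_abs_self _
    have hK2 : -|c1 * c2| ≤ c1 * c2 := neg_abs_le _
    have hR2 : (1:ℝ) ≤ R ^ 2 := one_le_pow₀ hR.le
    nlinarith [mul_le_mul_of_nonneg_left hK1 (show (0:ℝ) ≤ 1 by norm_num),
      mul_nonneg (abs_nonneg (c1 * c2)) (sub_nonneg.mpr hR2),
      mul_nonneg (sq_nonneg c1) (sub_nonneg.mpr hR2),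
      mul_nonneg (show (0:ℝ) ≤ |c1 * c2| + c1 * c2 by linarith) (sub_nonneg.mpr hR2)]
  calc c1 ^ 2 / 5 * R ^ 5 - (c1 ^ 2 / 5 + 2 * |c1 * c2|) * R ^ 2
      ≤ ∫ r in (1:ℝ)..R, (c1 ^ 2 * r ^ 4 + 2 * c1 * c2 * r) := by rw [hcomp]; exact hfin
    _ ≤ _ := hmono_int
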